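/- For every real ρ with 0 < ρ < 1 and every natural number D, (1-ρ)^2 · ∑_{ℓ=1}^{∞} ρ^ℓ · (ℓ - ⌊ℓ/(D+2)⌋) = ρ - (1-ρ)·ρ^{D+2}/(1 - ρ^{D+2}). -/

import Mathlib

theorem slow_mg_scheme2 (ρ : ℝ) (hρ0 : 0 < ρ) (hρ1 : ρ < 1) (D : ℕ) :
    (1 - ρ) ^ 2 * ∑' ℓ : ℕ, ρ ^ ℓ * ((ℓ : ℝ) - (ℓ / (D + 2) : ℕ))
      = ρ - (1 - ρ) * ρ ^ (D + 2) / (1 - ρ ^ (D + 2)) := by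
  set d := D + 2 with hd
  have hd0 : 0 < d := by omega
  haveI : NeZero d := ⟨by omega⟩
  have hρn : ‖ρ‖ < 1 := by rw [Real.norm_eq_abs, abs_of_pos hρ0]; exact hρ1
  have hρd0 : 0 < ρ ^ d := pow_pos hρ0 d
  have hρd1 : ρ ^ d < 1 := pow_lt_one₀ hρ0.le hρ1 (by omega)
  have hρdn : ‖ρ ^ d‖ < 1 := by rw [Real.norm_eq_abs, abs_of_pos hρd0]; exact hρd1
  have h1 : (1 : ℝ) - ρ ≠ 0 := by linarith
  have h2 : (1 : ℝ) - ρ ^ d ≠ 0 := by linarith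
  have hs1 : Summable (fun n : ℕ => (n : ℝ) * ρ ^ n) := by
    have := summable_pow_mul_geometric_of_norm_lt_one 1 hρn
    simpa using this
  have hs2 : Summable (fun n : ℕ => ρ ^ n * ((n / d : ℕ) : ℝ)) := by
    apply Summable.of_nonneg_of_le (fun n => by positivity) _ hs1
    intro n
    rw [mul_comm]
    apply mul_le_mul_of_nonneg_right _ (by positivity)
    exact_mod_cast Nat.cast_le.mpr (Nat.div_le_self n d)
  have hsplit : ∑' ℓ : ℕ, ρ ^ ℓ * ((ℓ : ℝ) - (ℓ / d : ℕ))
      = (∑' n : ℕ, (n : ℝ) * ρ ^ n) - ∑' n : ℕ, ρ ^ n * ((n / d : ℕ) : ℝ) := by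
    rw [← Summable.tsum_sub hs1 hs2]
    exact tsum_congr fun n => by ring
  have hS1 : ∑' n : ℕ, (n : ℝ) * ρ ^ n = ρ / (1 - ρ) ^ 2 :=
    tsum_coe_mul_geometric_of_norm_lt_one hρn
  have hSd : ∑' n : ℕ, (n : ℝ) * (ρ ^ d) ^ n = ρ ^ d / (1 - ρ ^ d) ^ 2 :=
    tsum_coe_mul_geometric_of_norm_lt_one hρdn
  -- key step: sum with floor
  set e := Nat.divModEquiv d with he
  have hfun : ∀ p : ℕ × Fin d,
      ρ ^ (e.symm p) * (((e.symm p : ℕ) / d : ℕ) : ℝ)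
        = ((p.1 : ℝ) * (ρ ^ d) ^ p.1) * ρ ^ (p.2 : ℕ) := by
    rintro ⟨q, r⟩
    have hinv : (e.symm (q, r) : ℕ) = q * d + (r : ℕ) := rfl
    have hdiv : (q * d + (r : ℕ)) / d = q := by
      rw [mul_comm, Nat.mul_add_div hd0, Nat.div_eq_of_lt r.is_lt]; omega
    rw [hinv, hdiv, pow_add, pow_mul]
    ring
  have hg : Summable (fun p : ℕ × Fin d =>
      ρ ^ (e.symm p) * (((e.symm p : ℕ) / d : ℕ) : ℝ)) :=
    (Equiv.summable_iff e.symm).mpr hs2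
  have hS2 : ∑' n : ℕ, ρ ^ n * ((n / d : ℕ) : ℝ)
      = ((1 - ρ ^ d) / (1 - ρ)) * (ρ ^ d / (1 - ρ ^ d) ^ 2) := by
    rw [← Equiv.tsum_eq e.symm (fun n => ρ ^ n * ((n / d : ℕ) : ℝ))]
    rw [Summable.tsum_prod' hg (fun q => Summable.of_finite)]
    have : ∀ q : ℕ, (∑' r : Fin d, ρ ^ (e.symm (q, r)) * (((e.symm (q, r) : ℕ) / d : ℕ) : ℝ))
        = ((q : ℝ) * (ρ ^ d) ^ q) * ∑ r : Fin d, ρ ^ (r : ℕ) := by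
      intro q
      rw [tsum_fintype]
      calc (∑ r : Fin d, ρ ^ (e.symm (q, r)) * (((e.symm (q, r) : ℕ) / d : ℕ) : ℝ))
          = ∑ r : Fin d, ((q : ℝ) * (ρ ^ d) ^ q) * ρ ^ (r : ℕ) :=
            Finset.sum_congr rfl fun r _ => hfun (q, r)
        _ = ((q : ℝ) * (ρ ^ d) ^ q) * ∑ r : Fin d, ρ ^ (r : ℕ) := by
            rw [← Finset.mul_sum]
    rw [tsum_congr this, tsum_mul_right, hSd]
    have hsum : ∑ r : Fin d, ρ ^ (r : ℕ) = (1 - ρ ^ d) / (1 - ρ) := by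
      rw [Fin.sum_univ_eq_sum_range, geom_sum_eq (by intro h; rw [h] at hρ1; linarith)]
      rw [div_eq_div_iff (by intro h; apply h1; linarith) h1]
      ring
    rw [hsum]; ring
  rw [hsplit, hS1, hS2]
  field_simp
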